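/- arXiv:2103.11839 — 2 statements merged into one kernel-verified Lean document; each statement's English description precedes it below -/
import Mathlib

section
/- Let m ≥ 1 be an integer and let x be a real number with 0 < x < 1. Then ∫₀ˣ log^m(t)/(1−t) dt = −log(1−x)·log^m(x) + m·Σ_{i=2}^{m+1} (−1)^{i−1} C(m−1,i−2)·(i−2)!·log^{m+1−i}(x)·Li_i(x), where C(m−1,i−2) is the binomial coefficient. Moreover, ∫₀¹ log^m(t)/(1−t) dt = (−1)^m m!·ζ(m+1). -/
/-- `Li p x = ∑_{n≥1} x^n / n^p`, the polylogarithm. -/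
noncomputable def Li (p : ℕ) (x : ℝ) : ℝ := ∑' n : ℕ, x ^ (n + 1) / (n + 1 : ℝ) ^ p

/-- `zr s = ζ(s) = ∑_{n≥1} n^{-s}`. -/
noncomputable def zr (s : ℕ) : ℝ := ∑' n : ℕ, 1 / (n + 1 : ℝ) ^ s

open Real Filter Set Topology MeasureTheory

noncomputable def LL (p : ℕ) (x : ℝ) : ℝ := ∑' n : ℕ, x ^ n / (n + 1 : ℝ) ^ p

lemma norm_term_le {x : ℝ} (p n : ℕ) : ‖x ^ n / (n + 1 : ℝ) ^ p‖ ≤ |x| ^ n := by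
  have h1 : (1:ℝ) ≤ (n + 1 : ℝ) ^ p := one_le_pow₀ (by norm_num)
  rw [norm_div, norm_pow, Real.norm_eq_abs, Real.norm_eq_abs,
    abs_of_pos (by positivity : (0:ℝ) < (n+1:ℝ)^p)]
  exact div_le_self (pow_nonneg (abs_nonneg x) n) h1

lemma summable_LL {x : ℝ} (hx : |x| < 1) (p : ℕ) :
    Summable (fun n : ℕ => x ^ n / (n + 1 : ℝ) ^ p) :=
  Summable.of_norm_bounded (summable_geometric_of_lt_one (abs_nonneg x) hx)
    (norm_term_le p)

lemma summable_Li {x : ℝ} (hx : |x| < 1) (p : ℕ) :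
    Summable (fun n : ℕ => x ^ (n+1) / (n + 1 : ℝ) ^ p) := by
  have h := (summable_LL hx p).mul_left x
  refine h.congr fun n => ?_
  rw [pow_succ']
  ring

lemma Li_eq_mul (p : ℕ) (x : ℝ) : Li p x = x * LL p x := by
  rw [Li, LL, ← tsum_mul_left]
  congr 1; funext n; rw [pow_succ']; ring

lemma LL_abs_le {x : ℝ} (hx0 : 0 ≤ x) (hx : x < 1) (p : ℕ) :
    |LL p x| ≤ (1 - x)⁻¹ := by
  have habs : |x| < 1 := by rwa [abs_of_nonneg hx0]
  calc |LL p x| ≤ ∑' n : ℕ, ‖x ^ n / (n + 1 : ℝ) ^ p‖ := by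
        exact norm_tsum_le_tsum_norm ((summable_LL habs p).norm)
    _ ≤ ∑' n : ℕ, x ^ n := by
        apply Summable.tsum_le_tsum _ (summable_LL habs p).norm
          (summable_geometric_of_lt_one hx0 hx)
        intro n
        simpa [abs_of_nonneg hx0] using norm_term_le (x := x) p n
    _ = (1 - x)⁻¹ := tsum_geometric_of_lt_one hx0 hx

lemma LL_zero_eq {x : ℝ} (hx0 : 0 ≤ x) (hx : x < 1) : LL 0 x = (1 - x)⁻¹ := by
  rw [LL]
  simp only [pow_zero, div_one]
  exact tsum_geometric_of_lt_one hx0 hx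

lemma Li_one_eq {x : ℝ} (hx : |x| < 1) : Li 1 x = -Real.log (1 - x) := by
  rw [Li]
  have h := (Real.hasSum_pow_div_log_of_abs_lt_one hx).tsum_eq
  simpa [pow_one] using h

lemma hasDerivAt_Li (q : ℕ) {x : ℝ} (hx : |x| < 1) :
    HasDerivAt (Li (q+1)) (LL q x) x := by
  set r : ℝ := (1 + |x|) / 2 with hr
  have hxr : |x| < r := by rw [hr]; linarith
  have hr0 : 0 ≤ r := le_trans (abs_nonneg x) hxr.le
  have hr1 : r < 1 := by rw [hr]; linarith
  have key : HasDerivAt (fun z => ∑' n : ℕ, z ^ (n+1) / (n + 1 : ℝ) ^ (q+1))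
      (∑' n : ℕ, x ^ n / (n + 1 : ℝ) ^ q) x := by
    refine hasDerivAt_tsum_of_isPreconnected
      (summable_geometric_of_lt_one hr0 hr1) Metric.isOpen_ball
      (Convex.isPreconnected (convex_ball 0 r))
      (g := fun (n : ℕ) (z : ℝ) => z ^ (n+1) / (n + 1 : ℝ) ^ (q+1))
      (g' := fun (n : ℕ) (z : ℝ) => z ^ n / (n + 1 : ℝ) ^ q)
      (y₀ := x) ?_ ?_ ?_ ?_ ?_
    · intro n y _
      have h := (hasDerivAt_pow (n+1) y).div_const ((n + 1 : ℝ) ^ (q+1))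
      refine h.congr_deriv ?_
      push_cast
      rw [pow_succ]
      field_simp
    · intro n y hy
      rw [Metric.mem_ball, Real.dist_eq, sub_zero] at hy
      calc ‖y ^ n / (n + 1 : ℝ) ^ q‖ ≤ |y| ^ n := norm_term_le q n
        _ ≤ r ^ n := pow_le_pow_left₀ (abs_nonneg y) hy.le n
    · rw [Metric.mem_ball, Real.dist_eq, sub_zero]; exact hxr
    · exact summable_Li hx (q+1)
    · rw [Metric.mem_ball, Real.dist_eq, sub_zero]; exact hxr
  exact key

noncomputable def cc (m j : ℕ) : ℝ := (-1)^j * (m.factorial : ℝ) / ((m - j).factorial : ℝ)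

lemma cc_zero (m : ℕ) : cc m 0 = 1 := by
  rw [cc]
  simp [Nat.factorial_ne_zero]

lemma cc_top (m : ℕ) : cc m m = (-1)^m * (m.factorial : ℝ) := by
  rw [cc, Nat.sub_self]
  simp

lemma cc_succ {m k : ℕ} (hk : k < m) : cc m (k+1) = -((m - k : ℕ) : ℝ) * cc m k := by
  obtain ⟨d, hd⟩ : ∃ d, m - k = d + 1 := ⟨m - k - 1, by omega⟩
  have h2 : m - (k+1) = d := by omega
  rw [cc, cc, hd, h2, Nat.factorial_succ]
  have h3 : ((d.factorial : ℝ)) ≠ 0 := Nat.cast_ne_zero.2 d.factorial_ne_zero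
  push_cast
  field_simp
  ring

lemma LL_eq_div (p : ℕ) {t : ℝ} (ht : t ≠ 0) : LL p t = Li p t / t := by
  rw [Li_eq_mul, mul_div_assoc, mul_comm]
  field_simp

noncomputable def JJ (m : ℕ) (t : ℝ) : ℝ :=
  ∑ j ∈ Finset.range (m+1), cc m j * (Real.log t)^(m-j) * Li (j+1) t

lemma hasDerivAt_JJ (m : ℕ) {t : ℝ} (ht0 : 0 < t) (ht1 : t < 1) :
    HasDerivAt (JJ m) ((Real.log t)^m / (1 - t)) t := by
  have habs : |t| < 1 := abs_lt.2 ⟨by linarith, ht1⟩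
  have hne : t ≠ 0 := ht0.ne'
  set A : ℕ → ℝ := fun j => cc m j * (((m - j : ℕ) : ℝ) * Real.log t ^ (m - j - 1) * t⁻¹) * Li (j+1) t with hA
  set B : ℕ → ℝ := fun j => cc m j * Real.log t ^ (m - j) * LL j t with hB
  have hD : HasDerivAt (JJ m) (∑ j ∈ Finset.range (m+1), (A j + B j)) t := by
    have hJ : JJ m = fun y => ∑ j ∈ Finset.range (m+1),
        cc m j * (Real.log y)^(m-j) * Li (j+1) y := rfl
    rw [hJ]
    apply HasDerivAt.fun_sum
    intro j _
    have hlog : HasDerivAt (fun y => (Real.log y)^(m-j))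
        (((m - j : ℕ) : ℝ) * Real.log t ^ (m - j - 1) * t⁻¹) t :=
      (Real.hasDerivAt_log hne).pow (m - j)
    have h := (hlog.const_mul (cc m j)).fun_mul (hasDerivAt_Li j habs)
    convert h using 1
  have hsum : (∑ j ∈ Finset.range (m+1), (A j + B j)) = (Real.log t)^m / (1 - t) := by
    rw [Finset.sum_add_distrib, Finset.sum_range_succ (f := A), Finset.sum_range_succ' (f := B)]
    have hAm : A m = 0 := by rw [hA]; simp [Nat.sub_self]
    have hB0 : B 0 = (Real.log t)^m / (1 - t) := by
      rw [hB]
      simp only [cc_zero, Nat.sub_zero, one_mul]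
      rw [LL_zero_eq ht0.le ht1, div_eq_mul_inv]
    have hBA : ∀ k ∈ Finset.range m, B (k+1) = -A k := by
      intro k hk
      rw [Finset.mem_range] at hk
      show cc m (k+1) * Real.log t ^ (m-(k+1)) * LL (k+1) t
        = -(cc m k * (((m - k : ℕ) : ℝ) * Real.log t ^ (m - k - 1) * t⁻¹) * Li (k+1) t)
      rw [cc_succ hk, LL_eq_div (k+1) hne]
      have hmk : m - (k+1) = m - k - 1 := by omega
      rw [hmk, div_eq_mul_inv]
      ring
    rw [Finset.sum_congr rfl hBA, Finset.sum_neg_distrib, hAm, hB0]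
    ring
  rwa [hsum] at hD

lemma tendsto_pow_log_mul_self (k : ℕ) :
    Tendsto (fun t : ℝ => Real.log t ^ k * t) (𝓝[>] (0:ℝ)) (𝓝 0) := by
  rcases Nat.eq_zero_or_pos k with hk | hk
  · subst hk
    simp only [pow_zero, one_mul]; exact (tendsto_id (x := 𝓝[>] (0:ℝ))).mono_right nhdsWithin_le_nhds
  · have hk' : (k:ℝ) ≠ 0 := Nat.cast_ne_zero.2 hk.ne'
    have h := (tendsto_log_mul_rpow_nhdsGT_zero
      (r := 1/(k:ℝ)) (by positivity)).pow k
    rw [zero_pow hk.ne'] at h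
    apply h.congr'
    filter_upwards [self_mem_nhdsWithin] with t ht
    have ht0 : (0:ℝ) < t := ht
    rw [mul_pow, ← Real.rpow_natCast (t ^ (1/(k:ℝ))) k, ← Real.rpow_mul ht0.le]
    rw [one_div, inv_mul_cancel₀ hk', Real.rpow_one]

lemma tendsto_JJ_zero (m : ℕ) : Tendsto (JJ m) (𝓝[>] (0:ℝ)) (𝓝 0) := by
  have key : ∀ j, Tendsto (fun t : ℝ => cc m j * Real.log t ^ (m - j) * Li (j+1) t)
      (𝓝[>] (0:ℝ)) (𝓝 0) := by
    intro j
    apply squeeze_zero_norm' (a := fun t => |cc m j| * (2 * |Real.log t ^ (m-j) * t|))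
    · filter_upwards [Ioo_mem_nhdsGT_of_mem
        (⟨le_rfl, by norm_num⟩ : (0:ℝ) ∈ Ico (0:ℝ) (1/2))] with t ht
      obtain ⟨ht0, ht1⟩ := ht
      have hLi : |Li (j+1) t| ≤ 2 * t := by
        rw [Li_eq_mul, abs_mul, abs_of_pos ht0]
        have h1 : |LL (j+1) t| ≤ (1 - t)⁻¹ := LL_abs_le ht0.le (by linarith) (j+1)
        have h2 : (1 - t)⁻¹ ≤ 2 := by
          rw [show (2:ℝ) = (1/2 : ℝ)⁻¹ by norm_num]
          apply inv_anti₀ <;> [norm_num; linarith]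
        nlinarith [abs_nonneg (LL (j+1) t)]
      calc ‖cc m j * Real.log t ^ (m-j) * Li (j+1) t‖
          = |cc m j| * |Real.log t ^ (m-j)| * |Li (j+1) t| := by
            rw [Real.norm_eq_abs, abs_mul, abs_mul]
        _ ≤ |cc m j| * |Real.log t ^ (m-j)| * (2 * t) := by
            apply mul_le_mul_of_nonneg_left hLi (by positivity)
        _ = |cc m j| * (2 * |Real.log t ^ (m-j) * t|) := by
            rw [abs_mul, abs_of_pos ht0]; ring
    · have h := ((tendsto_pow_log_mul_self (m-j)).abs.const_mul 2).const_mul (|cc m j|)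
      simpa using h
  have h := tendsto_finset_sum (Finset.range (m+1)) (fun j _ => key j)
  simp only [Finset.sum_const_zero] at h; exact h

lemma summable_inv_sq : Summable (fun n : ℕ => 1/((n:ℝ)+1)^2) := by
  have h : Summable (fun n : ℕ => 1/((n:ℝ))^2) := by
    simpa using Real.summable_one_div_nat_pow.mpr (le_refl 2)
  have h2 := (summable_nat_add_iff 1).2 h
  refine h2.congr fun n => ?_
  push_cast
  ring_nf

lemma Li_one_val (q : ℕ) : Li q 1 = zr q := by
  rw [Li, zr]; simp

lemma tendsto_Li_one {q : ℕ} (hq : 2 ≤ q) :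
    Tendsto (Li q) (𝓝[<] (1:ℝ)) (𝓝 (zr q)) := by
  have hc : ContinuousOn (Li q) (Icc (-1:ℝ) 1) := by
    apply continuousOn_tsum (u := fun n : ℕ => 1/((n:ℝ)+1)^2)
      (fun n => (Continuous.continuousOn (by continuity))) summable_inv_sq
    intro n x hx
    obtain ⟨hx1, hx2⟩ := hx
    have habs : |x| ≤ 1 := abs_le.2 ⟨hx1, hx2⟩
    have h1 : (0:ℝ) < (n:ℝ)+1 := by positivity
    rw [norm_div, norm_pow, Real.norm_eq_abs, Real.norm_eq_abs, abs_of_pos (pow_pos h1 q)]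
    apply div_le_div₀ (by positivity) (pow_le_one₀ (abs_nonneg x) habs) (by positivity)
    exact pow_le_pow_right₀ (by linarith) hq
  have h1 : (1:ℝ) ∈ Icc (-1:ℝ) 1 := ⟨by norm_num, le_rfl⟩
  have h2 := (hc 1 h1).tendsto
  rw [Li_one_val] at h2
  have h3 : 𝓝[<] (1:ℝ) = 𝓝[Ioo (-1:ℝ) 1] 1 :=
    (nhdsWithin_Ioo_eq_nhdsLT (by norm_num)).symm
  rw [h3]
  exact h2.mono_left (nhdsWithin_mono _ Ioo_subset_Icc_self)

lemma tendsto_log_one_sub_mul : Tendsto (fun t : ℝ => Real.log (1-t) * (1-t))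
    (𝓝[<] (1:ℝ)) (𝓝 0) := by
  have h1 : Tendsto (fun t : ℝ => (1:ℝ) - t) (𝓝[<] (1:ℝ)) (𝓝[>] (0:ℝ)) := by
    apply tendsto_nhdsWithin_of_tendsto_nhds_of_eventually_within
    · have h : Tendsto (fun t : ℝ => (1:ℝ) - t) (𝓝 1) (𝓝 0) :=
        (continuous_const.sub continuous_id).tendsto' 1 0 (by norm_num)
      exact h.mono_left nhdsWithin_le_nhds
    · filter_upwards [self_mem_nhdsWithin] with t ht
      simp only [mem_Iio] at ht
      simp only [mem_Ioi]
      linarith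
  have h2 := (tendsto_log_mul_rpow_nhdsGT_zero one_pos).comp h1
  refine h2.congr fun t => ?_
  simp [Real.rpow_one]

lemma tendsto_term0_one {m : ℕ} (hm : 1 ≤ m) :
    Tendsto (fun t : ℝ => Real.log t ^ m * Li 1 t) (𝓝[<] (1:ℝ)) (𝓝 0) := by
  apply squeeze_zero_norm' (a := fun t => 2^m * |Real.log (1-t) * (1-t)|)
  · filter_upwards [Ioo_mem_nhdsLT_of_mem
      (⟨by norm_num, le_rfl⟩ : (1:ℝ) ∈ Ioc (1/2 : ℝ) 1)] with t ht
    obtain ⟨ht0, ht1⟩ := ht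
    have htpos : (0:ℝ) < t := by linarith
    have habs : |t| < 1 := abs_lt.2 ⟨by linarith, ht1⟩
    rw [Li_one_eq habs]
    have hlog : |Real.log t| ≤ 2 * (1 - t) := by
      rw [abs_of_nonpos (Real.log_nonpos htpos.le ht1.le)]
      have h := Real.log_le_sub_one_of_pos (inv_pos.2 htpos)
      rw [Real.log_inv] at h
      have hinv : t⁻¹ ≤ 2 := by
        rw [show (2:ℝ) = (1/2 : ℝ)⁻¹ by norm_num]
        apply inv_anti₀ <;> [norm_num; linarith]
      have heq : t⁻¹ - 1 = t⁻¹ * (1 - t) := by field_simp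
      calc -Real.log t ≤ t⁻¹ - 1 := h
        _ = t⁻¹ * (1 - t) := heq
        _ ≤ 2 * (1 - t) := mul_le_mul_of_nonneg_right hinv (by linarith)
    calc ‖Real.log t ^ m * -Real.log (1-t)‖
        = |Real.log t| ^ m * |Real.log (1-t)| := by
          rw [Real.norm_eq_abs, abs_mul, abs_pow, abs_neg]
      _ ≤ (2*(1-t))^m * |Real.log (1-t)| := by
          apply mul_le_mul_of_nonneg_right (pow_le_pow_left₀ (abs_nonneg _) hlog m)
            (abs_nonneg _)
      _ ≤ 2^m * (1-t) * |Real.log (1-t)| := by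
          apply mul_le_mul_of_nonneg_right ?_ (abs_nonneg _)
          rw [mul_pow]
          apply mul_le_mul_of_nonneg_left ?_ (by positivity)
          calc (1-t)^m ≤ (1-t)^1 := pow_le_pow_of_le_one (by linarith) (by linarith) hm
            _ = 1 - t := pow_one _
      _ = 2^m * |Real.log (1-t) * (1-t)| := by
          rw [abs_mul, abs_of_nonneg (by linarith : (0:ℝ) ≤ 1 - t)]
          ring
  · have h := tendsto_log_one_sub_mul.abs.const_mul ((2:ℝ)^m)
    simpa using h

lemma tendsto_JJ_one {m : ℕ} (hm : 1 ≤ m) :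
    Tendsto (JJ m) (𝓝[<] (1:ℝ)) (𝓝 ((-1:ℝ)^m * (m.factorial : ℝ) * zr (m+1))) := by
  have hlog1 : Tendsto Real.log (𝓝[<] (1:ℝ)) (𝓝 0) := by
    have h := (Real.continuousAt_log one_ne_zero).tendsto
    rw [Real.log_one] at h
    exact h.mono_left nhdsWithin_le_nhds
  have h0 : Tendsto (fun t : ℝ => cc m 0 * Real.log t ^ (m - 0) * Li 1 t)
      (𝓝[<] (1:ℝ)) (𝓝 0) := by
    have h := (tendsto_term0_one hm).const_mul (cc m 0)
    simp only [mul_zero] at h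
    refine h.congr fun t => ?_
    simp only [Nat.sub_zero]
    ring
  have hj : ∀ j ∈ Finset.range m, Tendsto
      (fun t : ℝ => cc m (j+1) * Real.log t ^ (m - (j+1)) * Li (j+2) t)
      (𝓝[<] (1:ℝ)) (𝓝 (cc m (j+1) * (0:ℝ) ^ (m - (j+1)) * zr (j+2))) := by
    intro j _
    exact (tendsto_const_nhds.mul (hlog1.pow (m - (j+1)))).mul (tendsto_Li_one (by omega))
  have hsum := tendsto_finset_sum (Finset.range m) hj
  have hall := h0.add hsum
  have heq : ∀ t : ℝ, JJ m t =
      cc m 0 * Real.log t ^ (m - 0) * Li 1 t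
      + ∑ j ∈ Finset.range m, cc m (j+1) * Real.log t ^ (m - (j+1)) * Li (j+2) t := by
    intro t
    rw [JJ, Finset.sum_range_succ']
    ring
  have hval : (0:ℝ) + ∑ j ∈ Finset.range m, cc m (j+1) * (0:ℝ) ^ (m - (j+1)) * zr (j+2)
      = (-1:ℝ)^m * (m.factorial : ℝ) * zr (m+1) := by
    obtain ⟨m', rfl⟩ : ∃ m', m = m' + 1 := ⟨m - 1, by omega⟩
    rw [Finset.sum_range_succ]
    have hzero : ∀ j ∈ Finset.range m',
        cc (m'+1) (j+1) * (0:ℝ) ^ (m'+1 - (j+1)) * zr (j+2) = 0 := by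
      intro j hj
      rw [Finset.mem_range] at hj
      rw [zero_pow (by omega)]
      ring
    rw [Finset.sum_congr rfl hzero, Finset.sum_const_zero, Nat.sub_self, pow_zero, cc_top]
    have hz : zr (m'+1+1) = zr (m'+2) := rfl
    rw [hz]
    ring
  rw [← hval]
  exact hall.congr (fun t => (heq t).symm)

lemma intervalIntegrable_main (m : ℕ) (hm : 1 ≤ m) :
    IntervalIntegrable (fun t : ℝ => Real.log t ^ m / (1 - t)) volume 0 1 := by
  have hmeas : Measurable (fun t : ℝ => Real.log t ^ m / (1 - t)) :=
    (Real.measurable_log.pow_const m).div (measurable_const.sub measurable_id)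
  have hM : (1:ℝ) ≤ (m:ℝ) := by exact_mod_cast hm
  have ha : IntervalIntegrable (fun t : ℝ => Real.log t ^ m / (1 - t)) volume 0 (1/2) := by
    apply IntervalIntegrable.mono_fun'
      (g := fun t : ℝ => 2*(2*(m:ℝ))^m * t ^ (-(1/2) : ℝ))
      ((intervalIntegral.intervalIntegrable_rpow' (by norm_num)).const_mul _)
      hmeas.aestronglyMeasurable
    rw [uIoc_of_le (by norm_num : (0:ℝ) ≤ 1/2)]
    filter_upwards [MeasureTheory.ae_restrict_mem measurableSet_Ioc] with t ht
    obtain ⟨ht0, ht2⟩ := ht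
    have hlog : -Real.log t ≤ 2*(m:ℝ) * t ^ (-(1/(2*(m:ℝ))) : ℝ) := by
      have h := Real.log_le_sub_one_of_pos
        (Real.rpow_pos_of_pos ht0 (-(1/(2*(m:ℝ)))))
      rw [Real.log_rpow ht0] at h
      have hm0 : (0:ℝ) < 2*(m:ℝ) := by linarith
      have h2 : -(1/(2*(m:ℝ))) * Real.log t ≤ t ^ (-(1/(2*(m:ℝ))) : ℝ) := by
        have := Real.rpow_pos_of_pos ht0 (-(1/(2*(m:ℝ))))
        linarith
      calc -Real.log t = 2*(m:ℝ) * (-(1/(2*(m:ℝ))) * Real.log t) := by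
            field_simp
        _ ≤ 2*(m:ℝ) * t ^ (-(1/(2*(m:ℝ))) : ℝ) :=
            mul_le_mul_of_nonneg_left h2 hm0.le
    have hkey : |Real.log t|^m ≤ (2*(m:ℝ))^m * t ^ (-(1/2) : ℝ) := by
      have h1 : |Real.log t| = -Real.log t :=
        abs_of_nonpos (Real.log_nonpos ht0.le (by linarith))
      have h2 : (t ^ (-(1/(2*(m:ℝ))) : ℝ)) ^ m = t ^ (-(1/2) : ℝ) := by
        rw [← Real.rpow_natCast (t ^ (-(1/(2*(m:ℝ))) : ℝ)) m, ← Real.rpow_mul ht0.le]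
        congr 1
        have : (m:ℝ) ≠ 0 := by linarith
        field_simp
      calc |Real.log t|^m ≤ (2*(m:ℝ) * t ^ (-(1/(2*(m:ℝ))) : ℝ))^m := by
            apply pow_le_pow_left₀ (abs_nonneg _)
            rw [h1]; exact hlog
        _ = (2*(m:ℝ))^m * t ^ (-(1/2) : ℝ) := by rw [mul_pow, h2]
    have hrp : (0:ℝ) < t ^ (-(1/2) : ℝ) := Real.rpow_pos_of_pos ht0 _
    have h1t : (1:ℝ)/2 ≤ 1 - t := by linarith
    calc ‖Real.log t ^ m / (1 - t)‖ = |Real.log t|^m * (1-t)⁻¹ := by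
          rw [Real.norm_eq_abs, abs_div, abs_pow, abs_of_pos (by linarith : (0:ℝ) < 1 - t),
            div_eq_mul_inv]
      _ ≤ ((2*(m:ℝ))^m * t ^ (-(1/2) : ℝ)) * 2 := by
          apply mul_le_mul hkey ?_ (inv_nonneg.2 (by linarith)) (by positivity)
          rw [show (2:ℝ) = ((1:ℝ)/2)⁻¹ by norm_num]
          apply inv_anti₀ <;> [norm_num; linarith]
      _ = 2*(2*(m:ℝ))^m * t ^ (-(1/2) : ℝ) := by ring
  have hb : IntervalIntegrable (fun t : ℝ => Real.log t ^ m / (1 - t)) volume (1/2) 1 := by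
    apply IntervalIntegrable.mono_fun'
      (g := fun _ : ℝ => (2:ℝ)^m)
      intervalIntegrable_const
      hmeas.aestronglyMeasurable
    rw [uIoc_of_le (by norm_num : (1:ℝ)/2 ≤ 1)]
    filter_upwards [MeasureTheory.ae_restrict_mem measurableSet_Ioc] with t ht
    obtain ⟨ht0, ht1⟩ := ht
    have htpos : (0:ℝ) < t := by linarith
    rcases eq_or_lt_of_le ht1 with rfl | ht1
    · rw [Real.log_one]
      simp [zero_pow (by omega : m ≠ 0)]
    · have hs0 : (0:ℝ) < 1 - t := by linarith
      have hlog : |Real.log t| ≤ (1-t) / t := by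
        rw [abs_of_nonpos (Real.log_nonpos htpos.le ht1.le)]
        have h := Real.log_le_sub_one_of_pos (inv_pos.2 htpos)
        rw [Real.log_inv] at h
        have heq : t⁻¹ - 1 = (1-t) / t := by field_simp
        linarith [heq ▸ h]
      obtain ⟨m', rfl⟩ : ∃ m', m = m' + 1 := ⟨m - 1, by omega⟩
      have hcalc : ‖Real.log t ^ (m'+1) / (1 - t)‖ = |Real.log t|^(m'+1) / (1-t) := by
        rw [Real.norm_eq_abs, abs_div, abs_pow, abs_of_pos hs0]
      rw [hcalc]
      have h2 : ((1-t)/t)^(m'+1) / (1-t) = (1-t)^m' / t^(m'+1) := by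
        rw [div_pow, pow_succ]
        field_simp
      have h3 : (1-t)^m' / t^(m'+1) ≤ 1 / ((1/2 : ℝ))^(m'+1) := by
        apply div_le_div₀ (by norm_num) (pow_le_one₀ hs0.le (by linarith))
          (by positivity)
        apply pow_le_pow_left₀ (by norm_num) (by linarith)
      have h4 : (1:ℝ) / ((1/2 : ℝ))^(m'+1) = 2^(m'+1) := by
        rw [one_div, ← inv_pow]
        norm_num
      calc |Real.log t|^(m'+1) / (1-t) ≤ ((1-t)/t)^(m'+1) / (1-t) := by
            gcongr
        _ = (1-t)^m' / t^(m'+1) := h2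
        _ ≤ 2^(m'+1) := h4 ▸ h3
  exact ha.trans hb

lemma cc_eq_choose {m j : ℕ} (hj : j < m) :
    cc m (j+1) = (-1:ℝ)^(j+1) * (m:ℝ) * ((m-1).choose j : ℝ) * (j.factorial : ℝ) := by
  have h1 : (m-1).choose j * j.factorial * ((m-1) - j).factorial = (m-1).factorial :=
    Nat.choose_mul_factorial_mul_factorial (by omega)
  have h2 : m * (m-1).factorial = m.factorial := Nat.mul_factorial_pred (by omega)
  have h3 : m - (j+1) = m - 1 - j := by omega
  have keyn : m.factorial = m * ((m-1).choose j) * j.factorial * ((m-1)-j).factorial := by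
    calc m.factorial = m * (m-1).factorial := h2.symm
      _ = m * ((m-1).choose j * j.factorial * ((m-1)-j).factorial) := by rw [h1]
      _ = m * ((m-1).choose j) * j.factorial * ((m-1)-j).factorial := by ring
  have keyr : (m.factorial : ℝ)
      = (m:ℝ) * ((m-1).choose j : ℝ) * (j.factorial : ℝ) * (((m-1)-j).factorial : ℝ) := by
    exact_mod_cast congrArg (Nat.cast (R := ℝ)) keyn
  have h4 : (((m-1-j).factorial : ℝ)) ≠ 0 := Nat.cast_ne_zero.2 (Nat.factorial_ne_zero _)
  rw [cc, h3, keyr]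
  field_simp

lemma JJ_eq_rhs {m : ℕ} (hm : 1 ≤ m) {x : ℝ} (hx0 : 0 < x) (hx1 : x < 1) :
    JJ m x = -(Real.log (1 - x)) * (Real.log x) ^ m
      + (m : ℝ) * ∑ i ∈ Finset.Icc 2 (m + 1), (-1 : ℝ) ^ (i - 1)
          * ((m - 1).choose (i - 2) : ℝ) * ((i - 2).factorial : ℝ)
          * (Real.log x) ^ (m + 1 - i) * Li i x := by
  have habs : |x| < 1 := abs_lt.2 ⟨by linarith, hx1⟩
  have hsum : (m : ℝ) * ∑ i ∈ Finset.Icc 2 (m + 1), (-1 : ℝ) ^ (i - 1)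
          * ((m - 1).choose (i - 2) : ℝ) * ((i - 2).factorial : ℝ)
          * (Real.log x) ^ (m + 1 - i) * Li i x
      = ∑ j ∈ Finset.range m, cc m (j+1) * Real.log x ^ (m - (j+1)) * Li (j+1+1) x := by
    rw [← Finset.Ico_add_one_right_eq_Icc, Finset.sum_Ico_eq_sum_range]
    have hm2 : m + 1 + 1 - 2 = m := by omega
    rw [hm2, Finset.mul_sum]
    apply Finset.sum_congr rfl
    intro j hj
    rw [Finset.mem_range] at hj
    rw [show 2 + j - 1 = j + 1 from by omega, show 2 + j - 2 = j from by omega,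
      show m + 1 - (2 + j) = m - (j+1) from by omega, show 2 + j = j + 1 + 1 from by omega]
    rw [cc_eq_choose hj]
    ring
  rw [JJ, Finset.sum_range_succ', hsum, cc_zero, Li_one_eq habs]
  simp only [Nat.sub_zero]
  ring

theorem stmt2 (m : ℕ) (hm : 1 ≤ m) (x : ℝ) (hx0 : 0 < x) (hx1 : x < 1) :
    (∫ t in (0:ℝ)..x, (Real.log t) ^ m / (1 - t)) =
      -(Real.log (1 - x)) * (Real.log x) ^ m
      + (m : ℝ) * ∑ i ∈ Finset.Icc 2 (m + 1), (-1 : ℝ) ^ (i - 1)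
          * ((m - 1).choose (i - 2) : ℝ) * ((i - 2).factorial : ℝ)
          * (Real.log x) ^ (m + 1 - i) * Li i x ∧
    (∫ t in (0:ℝ)..1, (Real.log t) ^ m / (1 - t)) =
      (-1 : ℝ) ^ m * (m.factorial : ℝ) * zr (m + 1) := by
  have hInt1 : IntervalIntegrable (fun t : ℝ => Real.log t ^ m / (1 - t)) volume 0 1 :=
    intervalIntegrable_main m hm
  constructor
  · have hIntx : IntervalIntegrable (fun t : ℝ => Real.log t ^ m / (1 - t)) volume 0 x := by
      apply hInt1.mono_set
      rw [uIcc_of_le hx0.le, uIcc_of_le (by norm_num : (0:ℝ) ≤ 1)]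
      exact Icc_subset_Icc le_rfl hx1.le
    have htx : Tendsto (JJ m) (𝓝[<] x) (𝓝 (JJ m x)) :=
      ((hasDerivAt_JJ m hx0 hx1).continuousAt).tendsto.mono_left nhdsWithin_le_nhds
    have h := intervalIntegral.integral_eq_sub_of_hasDerivAt_of_tendsto hx0
      (fun t ht => hasDerivAt_JJ m ht.1 (lt_trans ht.2 hx1)) hIntx
      (tendsto_JJ_zero m) htx
    rw [h, sub_zero, JJ_eq_rhs hm hx0 hx1]
  · have h := intervalIntegral.integral_eq_sub_of_hasDerivAt_of_tendsto one_pos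
      (fun t ht => hasDerivAt_JJ m ht.1 ht.2) hInt1
      (tendsto_JJ_zero m) (tendsto_JJ_one hm)
    rw [h, sub_zero]
end

section
/- Let m, n be integers with m ≥ n ≥ 2 and let x be a real number with 0 < x < 1. Write C(r,s,y) := ∫₀^y log^r(t)/(1−t)^s dt and A(r,1,y) := ∫₀^y log^r(1−t)/t dt. For 0 ≤ y ≤ n−2, let T_y be the set of integer chains (i_0, i_1, …, i_y) with i_0 = n and i_{j−1} > i_j ≥ 2 for 1 ≤ j ≤ y (for y = 0 the chain is the single entry i_0 = n), and for such a chain set W := ∏_{j=0}^{y} 1/(i_j − 1) and W' := ∏_{j=1}^{y} 1/(i_j − 1). Then C(m,n,x) = ((−1)^m m!/(n−1))·Σ_{y=0}^{n−2} ζ(m−y)·Σ_{(i_0,…,i_y)∈T_y} W' + Σ_{y=0}^{n−2} binom(m,y)·y!·(−1)^{y} Σ_{(i_0,…,i_y)∈T_y} W·( log^{m−y}(x)/(1−x)^{i_y−1} − log^{m−y}(x) ) + Σ_{y=0}^{n−2} binom(m,y+1)·(y+1)!·(−1)^{y} Σ_{(i_0,…,i_y)∈T_y} W·A(m−y−1,1,1−x).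 -/
/-- `A r s y = ∫₀^y log^r(1-t)/t^s dt`. -/
noncomputable def Aint (r s : ℕ) (y : ℝ) : ℝ := ∫ t in (0:ℝ)..y, (Real.log (1 - t)) ^ r / t ^ s

/-- `C r s y = ∫₀^y log^r(t)/(1-t)^s dt`. -/
noncomputable def Cint (r s : ℕ) (y : ℝ) : ℝ := ∫ t in (0:ℝ)..y, (Real.log t) ^ r / (1 - t) ^ s

/-- `chainSum f n y = Σ_{(i_0,…,i_y) ∈ T_y} W · f i_y` with weight `W = ∏_{j=0}^y 1/(i_j-1)`,
the sum over all integer chains `i_0 = n > i_1 > ⋯ > i_y` with `i_j ≥ 2` for `1 ≤ j ≤ y`. -/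
noncomputable def chainSum (f : ℕ → ℝ) : ℕ → ℕ → ℝ
  | n, 0 => (1 / ((n : ℝ) - 1)) * f n
  | n, y + 1 => (1 / ((n : ℝ) - 1)) * ∑ i ∈ Finset.Icc 2 (n - 1), chainSum f i y

/-- `chainSum' f n y = Σ_{(i_0,…,i_y) ∈ T_y} W' · f i_y` with weight `W' = ∏_{j=1}^y 1/(i_j-1)`
(the factor `1/(i_0-1)` is omitted). -/
noncomputable def chainSum' (f : ℕ → ℝ) : ℕ → ℕ → ℝ
  | n, 0 => f n
  | n, y + 1 => ∑ i ∈ Finset.Icc 2 (n - 1), chainSum f i y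


open Real MeasureTheory Set Filter intervalIntegral

lemma neg_log_le {t r : ℝ} (ht : 0 < t) (hr : 0 < r) :
    -Real.log t ≤ t ^ (-r) / r := by
  have h1 : Real.log (t ^ (-r)) = -r * Real.log t := Real.log_rpow ht (-r)
  have h2 : Real.log (t ^ (-r)) ≤ t ^ (-r) - 1 :=
    Real.log_le_sub_one_of_pos (Real.rpow_pos_of_pos ht (-r))
  have h3 : -r * Real.log t ≤ t ^ (-r) := by nlinarith [Real.rpow_pos_of_pos ht (-r)]
  rw [le_div_iff₀ hr]
  nlinarith

lemma abs_logpow_le {t : ℝ} (ht : 0 < t) (ht1 : t ≤ 1) (j : ℕ) :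
    |Real.log t| ^ j ≤ (2 * (j + 1 : ℝ)) ^ j * t ^ (-(1/2) : ℝ) := by
  set r : ℝ := (2 * ((j : ℝ) + 1))⁻¹ with hrdef
  have hrpos : 0 < r := by positivity
  have habs : |Real.log t| = -Real.log t := by
    rw [abs_of_nonpos (Real.log_nonpos ht.le ht1)]
  have h1 : |Real.log t| ≤ t ^ (-r) * (2 * ((j:ℝ) + 1)) := by
    rw [habs]
    have := neg_log_le ht hrpos
    rw [div_eq_mul_inv, inv_inv] at this
    exact this
  have h2 : |Real.log t| ^ j ≤ (t ^ (-r) * (2 * ((j:ℝ) + 1))) ^ j :=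
    pow_le_pow_left₀ (abs_nonneg _) h1 j
  refine h2.trans ?_
  rw [mul_pow, ← Real.rpow_natCast (t ^ (-r)) j, ← Real.rpow_mul ht.le]
  have hle : (-(1/2) : ℝ) ≤ -r * (j:ℝ) := by
    rw [hrdef, neg_mul, neg_le_neg_iff, inv_mul_eq_div, div_le_iff₀ (by positivity)]
    nlinarith [Nat.cast_nonneg (α := ℝ) j]
  have hexp : t ^ (-r * (j:ℝ)) ≤ t ^ (-(1/2) : ℝ) :=
    Real.rpow_le_rpow_of_exponent_ge ht ht1 hle
  calc t ^ (-r * (j:ℝ)) * (2 * ((j:ℝ)+1)) ^ j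
      ≤ t ^ (-(1/2):ℝ) * (2 * ((j:ℝ)+1)) ^ j :=
        mul_le_mul_of_nonneg_right hexp (by positivity)
    _ = (2 * ((j:ℝ)+1)) ^ j * t ^ (-(1/2):ℝ) := by ring

lemma intervalIntegrable_logpow_mul {g : ℝ → ℝ} {c : ℝ} (hc : 0 < c) (hc1 : c ≤ 1)
    (j : ℕ) (hgm : Measurable g) (hg : ContinuousOn g (Set.Icc 0 c)) :
    IntervalIntegrable (fun t => Real.log t ^ j * g t) volume 0 c := by
  obtain ⟨M, hM⟩ := isCompact_Icc.exists_bound_of_continuousOn hg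
  have hM0 : 0 ≤ M := le_trans (norm_nonneg (g c)) (hM c (by constructor <;> [exact hc.le; rfl]))
  rw [intervalIntegrable_iff_integrableOn_Ioc_of_le hc.le]
  have hdom : IntegrableOn (fun t : ℝ => M * (2 * ((j:ℝ)+1)) ^ j * t ^ (-(1/2):ℝ))
      (Set.Ioc 0 c) volume := by
    have := (intervalIntegrable_rpow' (a := 0) (b := c) (by norm_num : (-1:ℝ) < -(1/2)))
    rw [intervalIntegrable_iff_integrableOn_Ioc_of_le hc.le] at this
    exact this.const_mul _
  refine Integrable.mono' hdom ?_ ?_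
  · exact ((Real.measurable_log.pow_const j).mul hgm).aestronglyMeasurable
  · rw [ae_restrict_iff' measurableSet_Ioc]
    filter_upwards with t ht
    have h0t : 0 < t := ht.1
    have ht1 : t ≤ 1 := ht.2.trans hc1
    have : ‖Real.log t ^ j * g t‖ ≤ |Real.log t| ^ j * M := by
      rw [norm_mul, norm_pow]
      exact mul_le_mul_of_nonneg_left
        (hM t ⟨h0t.le, ht.2⟩) (by positivity) |>.trans_eq rfl
    refine this.trans ?_
    have := abs_logpow_le h0t ht1 j
    calc |Real.log t| ^ j * M ≤ ((2 * ((j:ℝ)+1)) ^ j * t ^ (-(1/2):ℝ)) * M := by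
          exact mul_le_mul_of_nonneg_right this hM0
      _ = M * (2 * ((j:ℝ)+1)) ^ j * t ^ (-(1/2):ℝ) := by ring

lemma tendsto_mul_logpow (j : ℕ) :
    Filter.Tendsto (fun u : ℝ => u * Real.log u ^ j) (nhdsWithin 0 (Set.Ioi 0)) (nhds 0) := by
  cases j with
  | zero => simpa using (continuous_id'.tendsto (0:ℝ)).mono_left nhdsWithin_le_nhds
  | succ k =>
    have hr : (0:ℝ) < (((k:ℝ)+1))⁻¹ := by positivity
    have h := (tendsto_log_mul_rpow_nhdsGT_zero hr).pow (k+1)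
    rw [zero_pow (Nat.succ_ne_zero k)] at h
    refine h.congr' ?_
    filter_upwards [self_mem_nhdsWithin] with u (hu : (0:ℝ) < u)
    rw [mul_pow, ← Real.rpow_natCast (u ^ (((k:ℝ)+1)⁻¹)) (k+1), ← Real.rpow_mul hu.le]
    rw [show (((k:ℝ)+1)⁻¹ * ((k+1 : ℕ) : ℝ)) = 1 by push_cast; field_simp]
    rw [Real.rpow_one]
    ring

lemma momInt (r k : ℕ) : (∫ u in (0:ℝ)..1, u ^ k * Real.log u ^ r)
    = (-1 : ℝ) ^ r * r.factorial / ((k:ℝ) + 1) ^ (r + 1) := by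
  induction r with
  | zero => simp [integral_pow]
  | succ r ih =>
    set c : ℝ := ((r:ℝ)+1) / ((k:ℝ)+1) with hc
    set F : ℝ → ℝ := fun u => u ^ (k+1) * Real.log u ^ (r+1) * ((k:ℝ)+1)⁻¹ with hF
    set g : ℝ → ℝ := fun t => Real.log t ^ (r+1) * t ^ k + c * (Real.log t ^ r * t ^ k) with hg
    have hcont : ∀ j : ℕ, IntervalIntegrable (fun t : ℝ => Real.log t ^ j * t ^ k) volume 0 1 :=
      fun j => intervalIntegrable_logpow_mul one_pos le_rfl j (measurable_id.pow_const k) (continuous_pow k).continuousOn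
    have hint : IntervalIntegrable g volume 0 1 := (hcont (r+1)).add ((hcont r).const_mul c)
    have hder : ∀ t ∈ Set.Ioo (0:ℝ) 1, HasDerivAt F (g t) t := by
      intro t ht
      have ht0 : t ≠ 0 := ne_of_gt ht.1
      have h1 : HasDerivAt (fun u : ℝ => u ^ (k+1)) (((k:ℝ)+1) * t ^ k) t := by
        simpa using hasDerivAt_pow (k+1) t
      have h2 : HasDerivAt (fun u : ℝ => Real.log u ^ (r+1))
          ((((r:ℝ)+1)) * Real.log t ^ r * t⁻¹) t := by
        simpa using (Real.hasDerivAt_log ht0).fun_pow (r+1)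
      have h3 := (h1.fun_mul h2).mul_const (((k:ℝ)+1)⁻¹)
      refine h3.congr_deriv (Eq.symm ?_)
      rw [hg, hc]
      field_simp
      ring
    have ha : Filter.Tendsto F (nhdsWithin 0 (Set.Ioi 0)) (nhds 0) := by
      have h1 : Filter.Tendsto (fun u : ℝ => u ^ k) (nhdsWithin 0 (Set.Ioi 0)) (nhds ((0:ℝ)^k)) :=
        ((continuous_pow k).tendsto 0).mono_left nhdsWithin_le_nhds
      have h2 := (h1.mul (tendsto_mul_logpow (r+1))).mul_const (((k:ℝ)+1)⁻¹)
      rw [mul_zero, zero_mul] at h2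
      refine h2.congr' ?_
      filter_upwards with u
      rw [hF]
      ring
    have hb : Filter.Tendsto F (nhdsWithin 1 (Set.Iio 1)) (nhds 0) := by
      have hc1 : ContinuousAt F 1 := by
        apply ContinuousAt.mul
        apply ContinuousAt.mul
        · exact (continuous_pow (k+1)).continuousAt
        · exact (Real.continuousAt_log one_ne_zero).pow (r+1)
        · exact continuousAt_const
      have : F 1 = 0 := by simp [hF]
      rw [← this]
      exact hc1.continuousWithinAt.tendsto
    have hFTC := intervalIntegral.integral_eq_sub_of_hasDerivAt_of_tendsto one_pos hder hint ha hb
    rw [sub_zero] at hFTC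
    have hsplit : (∫ t in (0:ℝ)..1, g t)
        = (∫ t in (0:ℝ)..1, Real.log t ^ (r+1) * t ^ k)
          + c * ∫ t in (0:ℝ)..1, Real.log t ^ r * t ^ k := by
      rw [hg, intervalIntegral.integral_add (hcont (r+1)) ((hcont r).const_mul c),
        intervalIntegral.integral_const_mul]
    have hmc : ∀ j : ℕ, (∫ t in (0:ℝ)..1, Real.log t ^ j * t ^ k)
        = ∫ t in (0:ℝ)..1, t ^ k * Real.log t ^ j := by
      intro j; apply intervalIntegral.integral_congr; intro u _; ring
    rw [hFTC, hmc (r+1), hmc r, ih] at hsplit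
    have hk1 : ((k:ℝ)+1) ≠ 0 := by positivity
    have : (∫ u in (0:ℝ)..1, u ^ k * Real.log u ^ (r+1))
        = -(c * ((-1:ℝ)^r * r.factorial / ((k:ℝ)+1)^(r+1))) := by linarith
    rw [this, hc, Nat.factorial_succ]
    push_cast
    field_simp
    ring

lemma zr_summable {p : ℕ} (hp : 2 ≤ p) : Summable (fun n : ℕ => 1 / ((n : ℝ) + 1) ^ p) := by
  have h : Summable (fun n : ℕ => 1 / ((n : ℝ)) ^ p) :=
    Real.summable_one_div_nat_pow.mpr (by omega)
  have := h.comp_injective (add_right_injective 1)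
  refine this.congr fun n => ?_
  simp [add_comm 1 n]

lemma momInt' (r k : ℕ) : (∫ u in Set.Ioo (0:ℝ) 1, Real.log u ^ r * u ^ k)
    = (-1 : ℝ) ^ r * r.factorial / ((k:ℝ) + 1) ^ (r + 1) := by
  rw [← MeasureTheory.integral_Ioc_eq_integral_Ioo,
    ← intervalIntegral.integral_of_le zero_le_one]
  rw [← momInt r k]
  apply intervalIntegral.integral_congr
  intro u _; ring

lemma F_integrableOn (r k : ℕ) :
    MeasureTheory.IntegrableOn (fun u : ℝ => Real.log u ^ r * u ^ k) (Set.Ioo 0 1) volume := by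
  have h := intervalIntegrable_logpow_mul one_pos le_rfl r
    (measurable_id.pow_const k) (continuous_pow k).continuousOn
  rw [intervalIntegrable_iff_integrableOn_Ioc_of_le zero_le_one] at h
  exact h.mono_set Set.Ioo_subset_Ioc_self

lemma Jval (r : ℕ) (hr : 1 ≤ r) :
    (∫ u in (0:ℝ)..1, Real.log u ^ r / (1 - u)) = (-1:ℝ)^r * r.factorial * zr (r+1) := by
  rw [intervalIntegral.integral_of_le zero_le_one, MeasureTheory.integral_Ioc_eq_integral_Ioo]
  have step2 : (∫ u in Set.Ioo (0:ℝ) 1, Real.log u ^ r / (1 - u))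
      = ∫ u in Set.Ioo (0:ℝ) 1, (∑' k : ℕ, Real.log u ^ r * u ^ k) := by
    apply MeasureTheory.setIntegral_congr_fun measurableSet_Ioo
    intro u hu
    show Real.log u ^ r / (1 - u) = ∑' k : ℕ, Real.log u ^ r * u ^ k
    rw [tsum_mul_left, tsum_geometric_of_lt_one hu.1.le hu.2, div_eq_mul_inv]
  rw [step2]
  have hnorm : ∀ k : ℕ, (∫ u in Set.Ioo (0:ℝ) 1, ‖Real.log u ^ r * u ^ k‖)
      = r.factorial / ((k:ℝ) + 1) ^ (r + 1) := by
    intro k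
    have : ∀ u ∈ Set.Ioo (0:ℝ) 1, ‖Real.log u ^ r * u ^ k‖
        = (-1:ℝ)^r * (Real.log u ^ r * u ^ k) := by
      intro u hu
      have hlog : Real.log u ≤ 0 := Real.log_nonpos hu.1.le hu.2.le
      rw [Real.norm_eq_abs, abs_mul, abs_pow, abs_pow, abs_of_nonpos hlog,
        abs_of_nonneg hu.1.le, neg_pow]
      ring
    rw [MeasureTheory.setIntegral_congr_fun measurableSet_Ioo this,
      MeasureTheory.integral_const_mul, momInt' r k]
    rw [← mul_div_assoc, ← mul_assoc, ← mul_pow]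
    norm_num
  have hswap := MeasureTheory.integral_tsum_of_summable_integral_norm
    (F := fun (k : ℕ) (u : ℝ) => Real.log u ^ r * u ^ k)
    (μ := volume.restrict (Set.Ioo (0:ℝ) 1))
    (fun k => F_integrableOn r k)
    (by
      rw [funext hnorm]
      have hs := zr_summable (p := r + 1) (by omega)
      have := hs.mul_left (r.factorial : ℝ)
      refine this.congr fun k => ?_
      rw [mul_one_div])
  rw [← hswap]
  have : ∀ k : ℕ, (∫ u in Set.Ioo (0:ℝ) 1, Real.log u ^ r * u ^ k)
      = ((-1:ℝ)^r * r.factorial) * (1 / ((k:ℝ)+1)^(r+1)) := by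
    intro k; rw [momInt' r k]; ring
  rw [funext this, tsum_mul_left]
  rfl

lemma II_f_left {c : ℝ} (hc0 : 0 < c) (hc1 : c < 1) (r : ℕ) :
    IntervalIntegrable (fun u : ℝ => Real.log u ^ r * (1-u)⁻¹) volume 0 c := by
  refine intervalIntegrable_logpow_mul hc0 hc1.le r
    ((measurable_const.sub measurable_id).inv) ?_
  refine ((continuous_const.sub continuous_id).continuousOn).inv₀ ?_
  intro u hu
  have h2 : u < 1 := lt_of_le_of_lt hu.2 hc1
  intro h
  have h3 := sub_eq_zero.mp h
  simp only [id_eq] at h3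
  linarith

lemma II_f_right {x : ℝ} (hx0 : 0 < x) (hx1 : x < 1) (s : ℕ) :
    IntervalIntegrable (fun u : ℝ => Real.log u ^ (s+1) * (1-u)⁻¹) volume x 1 := by
  rw [intervalIntegrable_iff_integrableOn_Ioc_of_le hx1.le]
  set C : ℝ := (-Real.log x) ^ s * x⁻¹ with hC
  have hlogx : 0 < -Real.log x := by
    have := Real.log_neg hx0 hx1; linarith
  have hC0 : 0 ≤ C := by positivity
  refine MeasureTheory.Integrable.mono' (g := fun _ => C)
    (MeasureTheory.integrableOn_const measure_Ioc_lt_top.ne) ?_ ?_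
  · exact (((Real.measurable_log.pow_const (s+1)).mul
      ((measurable_const.sub measurable_id).inv))).aestronglyMeasurable
  · rw [MeasureTheory.ae_restrict_iff' measurableSet_Ioc]
    filter_upwards with u hu
    rcases eq_or_lt_of_le hu.2 with h1 | h1
    · rw [h1]
      simp [hC0]
    · have hu0 : 0 < u := lt_trans hx0 hu.1
      have h1u : 0 < 1 - u := by linarith
      have hlogu : Real.log u ≤ 0 := Real.log_nonpos hu0.le h1.le
      have hlog_le : -Real.log u ≤ -Real.log x := by
        have := Real.log_le_log hx0 hu.1.le
        linarith
      have hkey : -Real.log u ≤ (1 - u) * u⁻¹ := by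
        have h2 := Real.log_le_sub_one_of_pos (inv_pos.mpr hu0)
        rw [Real.log_inv] at h2
        have : u⁻¹ - 1 = (1 - u) * u⁻¹ := by field_simp
        linarith
      rw [Real.norm_eq_abs, abs_mul, abs_pow, abs_of_nonpos hlogu,
        abs_of_nonneg (inv_pos.mpr h1u).le, pow_succ]
      have step1 : (-Real.log u) ^ s ≤ (-Real.log x) ^ s :=
        pow_le_pow_left₀ (by linarith) hlog_le s
      have step2 : (-Real.log u) * (1-u)⁻¹ ≤ x⁻¹ := by
        have h3 : (-Real.log u) * (1-u)⁻¹ ≤ ((1-u) * u⁻¹) * (1-u)⁻¹ :=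
          mul_le_mul_of_nonneg_right hkey (inv_pos.mpr h1u).le
        have h4 : ((1-u) * u⁻¹) * (1-u)⁻¹ = u⁻¹ := by field_simp
        rw [h4] at h3
        exact h3.trans (inv_anti₀ hx0 hu.1.le)
      calc (-Real.log u) ^ s * (-Real.log u) * (1-u)⁻¹
          = (-Real.log u) ^ s * ((-Real.log u) * (1-u)⁻¹) := by ring
        _ ≤ (-Real.log x) ^ s * x⁻¹ := by
            exact mul_le_mul step1 step2
              (mul_nonneg (by linarith) (inv_pos.mpr h1u).le) (by positivity)
        _ = C := rfl

lemma CintOne {x : ℝ} (hx0 : 0 < x) (hx1 : x < 1) (r : ℕ) (hr : 1 ≤ r) :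
    Cint r 1 x = (-1:ℝ)^r * r.factorial * zr (r+1) - Aint r 1 (1-x) := by
  obtain ⟨s, rfl⟩ : ∃ s, r = s + 1 := ⟨r - 1, by omega⟩
  set f : ℝ → ℝ := fun u => Real.log u ^ (s+1) * (1-u)⁻¹ with hf
  have hC : Cint (s+1) 1 x = ∫ u in (0:ℝ)..x, f u := by
    apply intervalIntegral.integral_congr
    intro u _
    simp only [hf, pow_one, div_eq_mul_inv]
  have hJ : (∫ u in (0:ℝ)..1, f u) = (-1:ℝ)^(s+1) * (s+1).factorial * zr (s+2) := by
    rw [← Jval (s+1) (by omega)]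
    apply intervalIntegral.integral_congr
    intro u _
    simp only [hf, div_eq_mul_inv]
  have hA : Aint (s+1) 1 (1-x) = ∫ u in x..1, f u := by
    have hsub := intervalIntegral.integral_comp_sub_left (a := 0) (b := 1-x) f 1
    simp only [sub_zero, sub_sub_cancel] at hsub
    rw [← hsub]
    apply intervalIntegral.integral_congr
    intro t _
    simp only [hf, pow_one, div_eq_mul_inv, sub_sub_cancel]
  have hsplit := intervalIntegral.integral_add_adjacent_intervals
    (II_f_left hx0 hx1 (s+1)) (II_f_right hx0 hx1 s)
  rw [hC, hA, ← hJ]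
  linarith [hsplit]

lemma geom_aux (n : ℕ) {t : ℝ} (ht : t ≠ 0) (h1 : (1:ℝ) - t ≠ 0) :
    ∑ k ∈ Finset.Icc 1 n, (((1-t) ^ k)⁻¹ : ℝ) = (((1-t) ^ n)⁻¹ - 1) / t := by
  induction n with
  | zero => simp
  | succ n ih =>
    rw [Finset.sum_Icc_succ_top (by omega), ih, pow_succ]
    field_simp
    ring

lemma Crec {n m : ℕ} (hn : 2 ≤ n) (hm : 1 ≤ m) {x : ℝ} (hx0 : 0 < x) (hx1 : x < 1) :
    Cint m n x = (1/((n:ℝ)-1)) * (Real.log x ^ m * (((1-x)^(n-1))⁻¹) - Real.log x ^ m)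
      - ((m:ℝ)/((n:ℝ)-1)) * ∑ k ∈ Finset.Icc 1 (n-1), Cint (m-1) k x := by
  have hn1 : ((n:ℝ) - 1) ≠ 0 := by
    have : (2:ℝ) ≤ (n:ℝ) := by exact_mod_cast hn
    linarith
  set P : ℝ → ℝ := fun t => ∑ k ∈ Finset.Icc 1 (n-1), (((1-t)^k)⁻¹ : ℝ) with hP
  set F : ℝ → ℝ := fun t => Real.log t ^ m * (((1-t)^(n-1))⁻¹ - 1) * ((n:ℝ)-1)⁻¹ with hF
  set g : ℝ → ℝ := fun t => ((m:ℝ)/((n:ℝ)-1)) * (Real.log t ^ (m-1) * P t)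
      + Real.log t ^ m * ((1-t)^n)⁻¹ with hg
  have hPmeas : Measurable P :=
    Finset.measurable_sum _ (fun k _ => ((measurable_const.sub measurable_id).pow_const k).inv)
  have hPcont : ContinuousOn P (Set.Icc 0 x) := by
    apply continuousOn_finset_sum
    intro k _
    apply ContinuousOn.inv₀
    · exact ((continuous_const.sub continuous_id).pow k).continuousOn
    · intro u hu
      apply pow_ne_zero
      have : u < 1 := lt_of_le_of_lt hu.2 hx1
      intro h
      have h3 := sub_eq_zero.mp h
      linarith
  have hint1 : IntervalIntegrable (fun t => Real.log t ^ (m-1) * P t) volume 0 x :=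
    intervalIntegrable_logpow_mul hx0 hx1.le (m-1) hPmeas hPcont
  have hint2 : IntervalIntegrable (fun t => Real.log t ^ m * ((1-t)^n)⁻¹) volume 0 x := by
    refine intervalIntegrable_logpow_mul hx0 hx1.le m
      ((measurable_const.sub measurable_id).pow_const n).inv ?_
    apply ContinuousOn.inv₀
    · exact ((continuous_const.sub continuous_id).pow n).continuousOn
    · intro u hu
      apply pow_ne_zero
      have : u < 1 := lt_of_le_of_lt hu.2 hx1
      intro h
      have h3 := sub_eq_zero.mp h
      linarith
  have hint : IntervalIntegrable g volume 0 x := (hint1.const_mul _).add hint2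
  have hder : ∀ t ∈ Set.Ioo (0:ℝ) x, HasDerivAt F (g t) t := by
    intro t ht
    have ht0 : t ≠ 0 := ne_of_gt ht.1
    have ht1 : t < 1 := lt_trans ht.2 hx1
    have h1t : (1:ℝ) - t ≠ 0 := by intro h; linarith [sub_eq_zero.mp h]
    have h1 : HasDerivAt (fun u : ℝ => Real.log u ^ m)
        ((m:ℝ) * Real.log t ^ (m-1) * t⁻¹) t := by
      simpa using (Real.hasDerivAt_log ht0).fun_pow m
    have hbase : HasDerivAt (fun u : ℝ => 1 - u) (-1) t := by
      simpa using (hasDerivAt_id t).const_sub 1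
    have hpow : HasDerivAt (fun u : ℝ => (1-u)^(n-1))
        (((n-1 : ℕ):ℝ) * (1-t)^(n-1-1) * (-1)) t := hbase.fun_pow (n-1)
    have h2 : HasDerivAt (fun u : ℝ => ((1-u)^(n-1))⁻¹ - 1)
        (-((((n-1 : ℕ):ℝ) * (1-t)^(n-1-1) * (-1))) / ((1-t)^(n-1))^2) t :=
      (hpow.inv (pow_ne_zero _ h1t)).sub_const 1
    have h3 := (h1.fun_mul h2).mul_const (((n:ℝ)-1)⁻¹)
    refine h3.congr_deriv (Eq.symm ?_)
    have hPt : P t = (((1-t)^(n-1))⁻¹ - 1) / t := geom_aux (n-1) ht0 h1t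
    have hexp : ((1-t)^(n-1))^2 = (1-t)^(n-1-1) * (1-t)^n := by
      rw [← pow_mul, ← pow_add]
      congr 1
      omega
    have hcast : ((n-1 : ℕ):ℝ) = (n:ℝ) - 1 := by
      have : (1:ℕ) ≤ n := by omega
      push_cast [this]
      ring
    show (m:ℝ) / ((n:ℝ) - 1) * (Real.log t ^ (m - 1) * P t)
        + Real.log t ^ m * ((1 - t) ^ n)⁻¹ = _
    rw [hPt, hcast, hexp]
    have hm1 : Real.log t ^ m = Real.log t ^ (m-1) * Real.log t := by
      rw [← pow_succ]
      congr 1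
      omega
    rw [hm1]
    have h1tn : (1-t)^n ≠ 0 := pow_ne_zero _ h1t
    have h1tn1 : (1-t)^(n-1-1) ≠ 0 := pow_ne_zero _ h1t
    field_simp
  have ha : Filter.Tendsto F (nhdsWithin 0 (Set.Ioi 0)) (nhds 0) := by
    have hPc : Filter.Tendsto P (nhdsWithin 0 (Set.Ioi 0))
        (nhds (∑ k ∈ Finset.Icc 1 (n-1), ((((1:ℝ)-0)^k)⁻¹))) := by
      apply Filter.Tendsto.mono_left _ nhdsWithin_le_nhds
      apply tendsto_finset_sum
      intro k _
      exact ContinuousAt.inv₀ ((continuous_const.sub continuous_id).pow k).continuousAt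
        (by norm_num)
    have h2 := ((tendsto_mul_logpow m).mul hPc).mul_const (((n:ℝ)-1)⁻¹)
    rw [zero_mul, zero_mul] at h2
    refine h2.congr' ?_
    filter_upwards [self_mem_nhdsWithin, Ioo_mem_nhdsGT_of_mem
      (Set.left_mem_Ico.mpr one_pos)] with t ht' htIoo
    have ht0 : t ≠ 0 := ne_of_gt ht'
    have h1t : (1:ℝ) - t ≠ 0 := by
      intro h; have := sub_eq_zero.mp h
      have := htIoo.2; linarith
    have hPt : P t = (((1-t)^(n-1))⁻¹ - 1) / t := geom_aux (n-1) ht0 h1t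
    rw [hF]
    simp only
    rw [hPt]
    field_simp
  have hb : Filter.Tendsto F (nhdsWithin x (Set.Iio x)) (nhds (F x)) := by
    refine ContinuousWithinAt.tendsto (ContinuousAt.continuousWithinAt ?_)
    have h1x : (1:ℝ) - x ≠ 0 := by intro h; have := sub_eq_zero.mp h; linarith
    apply ContinuousAt.mul
    apply ContinuousAt.mul
    · exact ((Real.continuousAt_log (ne_of_gt hx0)).pow m)
    · apply ContinuousAt.sub _ continuousAt_const
      apply ContinuousAt.inv₀
      · exact ((continuous_const.sub continuous_id).pow (n-1)).continuousAt
      · exact pow_ne_zero _ h1x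
    · exact continuousAt_const
  have hFTC := intervalIntegral.integral_eq_sub_of_hasDerivAt_of_tendsto hx0 hder hint ha hb
  rw [sub_zero] at hFTC
  have hsplit : (∫ t in (0:ℝ)..x, g t)
      = ((m:ℝ)/((n:ℝ)-1)) * (∫ t in (0:ℝ)..x, Real.log t ^ (m-1) * P t)
        + ∫ t in (0:ℝ)..x, Real.log t ^ m * ((1-t)^n)⁻¹ := by
    rw [hg, intervalIntegral.integral_add (hint1.const_mul _) hint2,
      intervalIntegral.integral_const_mul]
  have hPint : (∫ t in (0:ℝ)..x, Real.log t ^ (m-1) * P t)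
      = ∑ k ∈ Finset.Icc 1 (n-1), Cint (m-1) k x := by
    have : ∀ t : ℝ, Real.log t ^ (m-1) * P t
        = ∑ k ∈ Finset.Icc 1 (n-1), Real.log t ^ (m-1) * ((1-t)^k)⁻¹ := by
      intro t; rw [hP]; rw [Finset.mul_sum]
    rw [intervalIntegral.integral_congr (fun t _ => this t)]
    rw [intervalIntegral.integral_finset_sum]
    · apply Finset.sum_congr rfl
      intro k _
      apply intervalIntegral.integral_congr
      intro t _
      simp only [div_eq_mul_inv]
    · intro k _
      refine intervalIntegrable_logpow_mul hx0 hx1.le (m-1)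
        ((measurable_const.sub measurable_id).pow_const k).inv ?_
      apply ContinuousOn.inv₀
      · exact ((continuous_const.sub continuous_id).pow k).continuousOn
      · intro u hu
        apply pow_ne_zero
        have : u < 1 := lt_of_le_of_lt hu.2 hx1
        intro h
        have h3 := sub_eq_zero.mp h
        linarith
  have hCn : (∫ t in (0:ℝ)..x, Real.log t ^ m * ((1-t)^n)⁻¹) = Cint m n x := by
    apply intervalIntegral.integral_congr
    intro t _
    simp only [div_eq_mul_inv]
  rw [hsplit, hPint, hCn] at hFTC
  have hFx : F x = (1/((n:ℝ)-1)) * (Real.log x ^ m * (((1-x)^(n-1))⁻¹) - Real.log x ^ m) := by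
    rw [hF]
    field_simp
  rw [← hFx]
  linarith [hFTC]

lemma chainSum_zero_eq (f : ℕ → ℝ) (n : ℕ) :
    chainSum f n 0 = (1 / ((n : ℝ) - 1)) * f n := rfl

lemma chainSum_succ_eq (f : ℕ → ℝ) (n y : ℕ) :
    chainSum f n (y+1) = (1 / ((n : ℝ) - 1)) * ∑ i ∈ Finset.Icc 2 (n - 1), chainSum f i y := rfl

lemma chainSum'_eq (f : ℕ → ℝ) {n : ℕ} (hn : 2 ≤ n) (y : ℕ) :
    chainSum' f n y = ((n : ℝ) - 1) * chainSum f n y := by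
  have hne : ((n:ℝ) - 1) ≠ 0 := by
    have : (2:ℝ) ≤ (n:ℝ) := by exact_mod_cast hn
    linarith
  cases y with
  | zero =>
    rw [chainSum_zero_eq]
    show f n = _
    field_simp
  | succ y =>
    rw [chainSum_succ_eq]
    show (∑ i ∈ Finset.Icc 2 (n - 1), chainSum f i y) = _
    field_simp

lemma chainSum_eq_zero (f : ℕ → ℝ) : ∀ y n, 1 ≤ n → n ≤ y + 1 → chainSum f n y = 0 := by
  intro y
  induction y with
  | zero =>
    intro n h1 h2
    have : n = 1 := by omega
    subst this
    rw [chainSum_zero_eq]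
    norm_num
  | succ y ih =>
    intro n h1 h2
    rw [chainSum_succ_eq]
    rw [Finset.sum_eq_zero, mul_zero]
    intro i hi
    rw [Finset.mem_Icc] at hi
    exact ih i (by omega) (by omega)

lemma sumIcc_chainSum (f : ℕ → ℝ) {N : ℕ} (hN : 1 ≤ N) (y : ℕ) :
    ∑ k ∈ Finset.Icc 2 N, chainSum f k y = (N:ℝ) * chainSum f (N+1) (y+1) := by
  rw [chainSum_succ_eq]
  have h1 : N + 1 - 1 = N := rfl
  rw [h1]
  have hc : ((N+1:ℕ):ℝ) - 1 = (N:ℝ) := by push_cast; ring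
  rw [hc]
  have hNne : (N:ℝ) ≠ 0 := by
    have : (0:ℝ) < N := by exact_mod_cast hN
    linarith
  field_simp

lemma swap_sum {N : ℕ} (hN : 2 ≤ N) (c : ℕ → ℝ) (F : ℕ → ℕ → ℝ) :
    ∑ k ∈ Finset.Icc 2 N, ∑ y ∈ Finset.range (k-1), c y * chainSum (F y) k y
      = ∑ y ∈ Finset.range (N-1), c y * ((N:ℝ) * chainSum (F y) (N+1) (y+1)) := by
  have step1 : ∀ k ∈ Finset.Icc 2 N, (∑ y ∈ Finset.range (k-1), c y * chainSum (F y) k y)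
      = ∑ y ∈ Finset.range (N-1), c y * chainSum (F y) k y := by
    intro k hk
    rw [Finset.mem_Icc] at hk
    apply Finset.sum_subset
    · apply Finset.range_subset_range.mpr; omega
    · intro y _ hy
      rw [Finset.mem_range, not_lt] at hy
      rw [chainSum_eq_zero (F y) y k (by omega) (by omega), mul_zero]
  rw [Finset.sum_congr rfl step1, Finset.sum_comm]
  apply Finset.sum_congr rfl
  intro y _
  rw [← Finset.mul_sum, sumIcc_chainSum (F y) (by omega) y]

lemma main {x : ℝ} (hx0 : 0 < x) (hx1 : x < 1) :
    ∀ n, 2 ≤ n → ∀ m, n ≤ m → Cint m n x =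
      ((-1 : ℝ) ^ m * (m.factorial : ℝ) / ((n : ℝ) - 1))
        * (∑ y ∈ Finset.range (n - 1), zr (m - y) * chainSum' (fun _ => (1 : ℝ)) n y)
      + (∑ y ∈ Finset.range (n - 1), (m.choose y : ℝ) * (y.factorial : ℝ) * (-1 : ℝ) ^ y
        * chainSum (fun i =>
            (Real.log x) ^ (m - y) / (1 - x) ^ (i - 1) - (Real.log x) ^ (m - y)) n y)
      + (∑ y ∈ Finset.range (n - 1), (m.choose (y + 1) : ℝ) * ((y + 1).factorial : ℝ)
        * (-1 : ℝ) ^ y * chainSum (fun _ => Aint (m - y - 1) 1 (1 - x)) n y) := by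
  intro n
  induction n using Nat.strong_induction_on with
  | _ n IH =>
    intro hn m hm
    have hfac : (m.factorial : ℝ) = m * ((m-1).factorial : ℝ) := by
      rw [← Nat.mul_factorial_pred (by omega : m ≠ 0)]
      push_cast
      ring
    have hsign : (-1:ℝ)^m = -(-1:ℝ)^(m-1) := by
      conv_lhs => rw [show m = (m-1)+1 by omega]
      rw [pow_succ]
      ring
    rcases eq_or_lt_of_le hn with hn2 | hn3
    · -- base case n = 2
      subst hn2
      have hb := Crec (n := 2) le_rfl (by omega : 1 ≤ m) hx0 hx1
      rw [show (2:ℕ)-1 = 1 from rfl, Finset.Icc_self, Finset.sum_singleton] at hb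
      have hc1 := CintOne hx0 hx1 (m-1) (by omega)
      rw [show m - 1 + 1 = m by omega] at hc1
      rw [hb, hc1]
      simp only [show (2:ℕ)-1 = 1 from rfl, Finset.sum_range_one, Nat.sub_zero,
        Nat.choose_zero_right, Nat.choose_one_right, Nat.factorial_zero, Nat.factorial_one,
        chainSum_zero_eq, chainSum', pow_zero, pow_one]
      norm_num
      rw [hsign, hfac]
      ring
    · -- step case
      obtain ⟨N, rfl⟩ : ∃ N, n = N + 1 := ⟨n - 1, by omega⟩
      have hN2 : 2 ≤ N := by omega
      have hNne : ((N:ℝ)) ≠ 0 := by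
        have : (0:ℝ) < (N:ℝ) := by exact_mod_cast (by omega : 0 < N)
        linarith
      set L := Real.log x with hL
      -- recursion step
      have hrec := Crec (n := N+1) (by omega) (by omega : 1 ≤ m) hx0 hx1
      rw [show (N+1) - 1 = N by omega,
        show ((N+1:ℕ):ℝ) - 1 = (N:ℝ) by push_cast; ring] at hrec
      have hicc : Finset.Icc 1 N = insert 1 (Finset.Icc 2 N) := by
        ext k
        simp only [Finset.mem_Icc, Finset.mem_insert]
        omega
      rw [hicc, Finset.sum_insert (by simp)] at hrec
      rw [← hL] at hrec
      have hc1 := CintOne hx0 hx1 (m-1) (by omega)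
      rw [show m - 1 + 1 = m by omega] at hc1
      rw [hc1] at hrec
      -- expand inner Cints with IH
      have hIH : ∀ k ∈ Finset.Icc 2 N, Cint (m-1) k x =
          ((-1:ℝ)^(m-1) * ((m-1).factorial : ℝ) / ((k:ℝ) - 1))
            * (∑ y ∈ Finset.range (k-1), zr (m-1-y) * chainSum' (fun _ => (1:ℝ)) k y)
          + (∑ y ∈ Finset.range (k-1), ((m-1).choose y : ℝ) * (y.factorial : ℝ) * (-1:ℝ)^y
              * chainSum (fun i => L ^ (m-1-y) / (1-x)^(i-1) - L^(m-1-y)) k y)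
          + (∑ y ∈ Finset.range (k-1), ((m-1).choose (y+1) : ℝ) * ((y+1).factorial : ℝ)
              * (-1:ℝ)^y * chainSum (fun _ => Aint (m-1-y-1) 1 (1-x)) k y) := by
        intro k hk
        rw [Finset.mem_Icc] at hk
        exact IH k (by omega) (by omega) (m-1) (by omega)
      have hsum3 : (∑ k ∈ Finset.Icc 2 N, Cint (m-1) k x)
          = (∑ k ∈ Finset.Icc 2 N, ((-1:ℝ)^(m-1) * ((m-1).factorial : ℝ) / ((k:ℝ) - 1))
              * (∑ y ∈ Finset.range (k-1), zr (m-1-y) * chainSum' (fun _ => (1:ℝ)) k y))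
          + (∑ k ∈ Finset.Icc 2 N, ∑ y ∈ Finset.range (k-1),
              ((m-1).choose y:ℝ) * (y.factorial:ℝ) * (-1:ℝ)^y
              * chainSum (fun i => L^(m-1-y)/(1-x)^(i-1) - L^(m-1-y)) k y)
          + (∑ k ∈ Finset.Icc 2 N, ∑ y ∈ Finset.range (k-1),
              ((m-1).choose (y+1):ℝ) * ((y+1).factorial:ℝ)
              * (-1:ℝ)^y * chainSum (fun _ => Aint (m-1-y-1) 1 (1-x)) k y) := by
        rw [Finset.sum_congr rfl hIH, Finset.sum_add_distrib, Finset.sum_add_distrib]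
      have hE1 : (∑ k ∈ Finset.Icc 2 N, ((-1:ℝ)^(m-1) * ((m-1).factorial : ℝ) / ((k:ℝ) - 1))
            * (∑ y ∈ Finset.range (k-1), zr (m-1-y) * chainSum' (fun _ => (1:ℝ)) k y))
          = ∑ y ∈ Finset.range (N-1), ((-1:ℝ)^(m-1) * ((m-1).factorial:ℝ) * zr (m-1-y))
              * ((N:ℝ) * chainSum (fun _ => (1:ℝ)) (N+1) (y+1)) := by
        rw [← swap_sum hN2 (fun y => (-1:ℝ)^(m-1) * ((m-1).factorial:ℝ) * zr (m-1-y))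
          (fun _ _ => (1:ℝ))]
        apply Finset.sum_congr rfl
        intro k hk
        rw [Finset.mem_Icc] at hk
        have hkne : ((k:ℝ) - 1) ≠ 0 := by
          have : (2:ℝ) ≤ (k:ℝ) := by exact_mod_cast hk.1
          linarith
        rw [Finset.mul_sum]
        apply Finset.sum_congr rfl
        intro y _
        rw [chainSum'_eq _ (by omega)]
        field_simp
      have hE2 : (∑ k ∈ Finset.Icc 2 N, ∑ y ∈ Finset.range (k-1),
              ((m-1).choose y:ℝ) * (y.factorial:ℝ) * (-1:ℝ)^y
              * chainSum (fun i => L^(m-1-y)/(1-x)^(i-1) - L^(m-1-y)) k y)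
          = ∑ y ∈ Finset.range (N-1), (((m-1).choose y:ℝ) * (y.factorial:ℝ) * (-1:ℝ)^y)
              * ((N:ℝ) * chainSum (fun i => L^(m-1-y)/(1-x)^(i-1) - L^(m-1-y)) (N+1) (y+1)) := by
        rw [← swap_sum hN2 (fun y => ((m-1).choose y:ℝ) * (y.factorial:ℝ) * (-1:ℝ)^y)
          (fun y i => L^(m-1-y)/(1-x)^(i-1) - L^(m-1-y))]
      have hE3 : (∑ k ∈ Finset.Icc 2 N, ∑ y ∈ Finset.range (k-1),
              ((m-1).choose (y+1):ℝ) * ((y+1).factorial:ℝ)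
              * (-1:ℝ)^y * chainSum (fun _ => Aint (m-1-y-1) 1 (1-x)) k y)
          = ∑ y ∈ Finset.range (N-1), (((m-1).choose (y+1):ℝ) * ((y+1).factorial:ℝ) * (-1:ℝ)^y)
              * ((N:ℝ) * chainSum (fun _ => Aint (m-1-y-1) 1 (1-x)) (N+1) (y+1)) := by
        rw [← swap_sum hN2 (fun y => ((m-1).choose (y+1):ℝ) * ((y+1).factorial:ℝ) * (-1:ℝ)^y)
          (fun y _ => Aint (m-1-y-1) 1 (1-x))]
      have hSA : (∑ k ∈ Finset.Icc 2 N, Cint (m-1) k x)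
          = ∑ y ∈ Finset.range (N-1),
              ( ((-1:ℝ)^(m-1) * ((m-1).factorial:ℝ) * zr (m-1-y))
                  * ((N:ℝ) * chainSum (fun _ => (1:ℝ)) (N+1) (y+1))
              + (((m-1).choose y:ℝ) * (y.factorial:ℝ) * (-1:ℝ)^y)
                  * ((N:ℝ) * chainSum (fun i => L^(m-1-y)/(1-x)^(i-1) - L^(m-1-y)) (N+1) (y+1))
              + (((m-1).choose (y+1):ℝ) * ((y+1).factorial:ℝ) * (-1:ℝ)^y)
                  * ((N:ℝ) * chainSum (fun _ => Aint (m-1-y-1) 1 (1-x)) (N+1) (y+1)) ) := by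
        rw [hsum3, hE1, hE2, hE3, ← Finset.sum_add_distrib, ← Finset.sum_add_distrib]
      rw [hrec, hSA]
      -- now work on the RHS (target) shape
      rw [show (N+1) - 1 = N by omega,
        show ((N+1:ℕ):ℝ) - 1 = (N:ℝ) by push_cast; ring]
      have hT1s := Finset.sum_range_succ'
        (fun y => zr (m - y) * chainSum' (fun _ => (1:ℝ)) (N+1) y) (N-1)
      have hT2s := Finset.sum_range_succ'
        (fun y => (m.choose y : ℝ) * (y.factorial : ℝ) * (-1 : ℝ) ^ y
          * chainSum (fun i => L ^ (m - y) / (1 - x) ^ (i - 1) - L ^ (m - y)) (N+1) y) (N-1)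
      have hT3s := Finset.sum_range_succ'
        (fun y => (m.choose (y + 1) : ℝ) * ((y + 1).factorial : ℝ)
          * (-1 : ℝ) ^ y * chainSum (fun _ => Aint (m - y - 1) 1 (1 - x)) (N+1) y) (N-1)
      rw [show N-1+1 = N by omega] at hT1s hT2s hT3s
      rw [hT1s, hT2s, hT3s]
      beta_reduce
      -- pointwise conversion of chainSum' in the shifted zeta sum
      have hT1in : (∑ y ∈ Finset.range (N-1),
            zr (m - (y+1)) * chainSum' (fun _ => (1:ℝ)) (N+1) (y+1))
          = ∑ y ∈ Finset.range (N-1),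
            zr (m - (y+1)) * ((N:ℝ) * chainSum (fun _ => (1:ℝ)) (N+1) (y+1)) := by
        apply Finset.sum_congr rfl
        intro y _
        rw [chainSum'_eq _ (by omega : 2 ≤ N+1),
          show ((N+1:ℕ):ℝ) - 1 = (N:ℝ) by push_cast; ring]
      rw [hT1in]
      -- evaluate the y = 0 boundary terms
      have hz1 : chainSum' (fun _ => (1:ℝ)) (N+1) 0 = 1 := rfl
      rw [hz1]
      rw [chainSum_zero_eq (fun i => L ^ (m - 0) / (1 - x) ^ (i - 1) - L ^ (m - 0)) (N+1)]
      rw [chainSum_zero_eq (fun _ => Aint (m - 0 - 1) 1 (1 - x)) (N+1)]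
      simp only [Nat.sub_zero, pow_zero, zero_add, Nat.choose_zero_right, Nat.choose_one_right,
        Nat.factorial_zero, Nat.factorial_one, Nat.cast_one, one_mul, mul_one,
        Nat.add_sub_cancel]
      rw [show ((N+1:ℕ):ℝ) - 1 = (N:ℝ) by push_cast; ring]
      -- the key pointwise identity for the sums
      have hkey : -((m:ℝ)/(N:ℝ)) * (∑ y ∈ Finset.range (N-1),
              ( ((-1:ℝ)^(m-1) * ((m-1).factorial:ℝ) * zr (m-1-y))
                  * ((N:ℝ) * chainSum (fun _ => (1:ℝ)) (N+1) (y+1))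
              + (((m-1).choose y:ℝ) * (y.factorial:ℝ) * (-1:ℝ)^y)
                  * ((N:ℝ) * chainSum (fun i => L^(m-1-y)/(1-x)^(i-1) - L^(m-1-y)) (N+1) (y+1))
              + (((m-1).choose (y+1):ℝ) * ((y+1).factorial:ℝ) * (-1:ℝ)^y)
                  * ((N:ℝ) * chainSum (fun _ => Aint (m-1-y-1) 1 (1-x)) (N+1) (y+1)) ))
          = ((-1:ℝ)^m * (m.factorial:ℝ) / (N:ℝ)) * (∑ y ∈ Finset.range (N-1),
              zr (m - (y+1)) * ((N:ℝ) * chainSum (fun _ => (1:ℝ)) (N+1) (y+1)))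
            + (∑ y ∈ Finset.range (N-1), (m.choose (y+1) : ℝ) * ((y+1).factorial : ℝ)
                * (-1:ℝ)^(y+1)
                * chainSum (fun i => L ^ (m - (y+1)) / (1 - x) ^ (i - 1) - L ^ (m - (y+1)))
                  (N+1) (y+1))
            + (∑ y ∈ Finset.range (N-1), (m.choose (y+1+1) : ℝ) * ((y+1+1).factorial : ℝ)
                * (-1:ℝ)^(y+1)
                * chainSum (fun _ => Aint (m - (y+1) - 1) 1 (1-x)) (N+1) (y+1)) := by
        rw [Finset.mul_sum, Finset.mul_sum, ← Finset.sum_add_distrib, ← Finset.sum_add_distrib]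
        apply Finset.sum_congr rfl
        intro y _
        have hidx1 : m - 1 - y = m - (y+1) := by omega
        have hidx2 : m - 1 - y - 1 = m - (y+1) - 1 := by omega
        rw [hidx1]
        have hcf1 : m.choose (y+1) * (y+1).factorial = m * ((m-1).choose y * y.factorial) := by
          have h1 := Nat.add_one_mul_choose_eq (m-1) y
          rw [show m - 1 + 1 = m by omega] at h1
          rw [Nat.factorial_succ, ← mul_assoc, ← h1]
          ring
        have hcf2 : m.choose (y+1+1) * (y+1+1).factorial
            = m * ((m-1).choose (y+1) * (y+1).factorial) := by
          have h1 := Nat.add_one_mul_choose_eq (m-1) (y+1)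
          rw [show m - 1 + 1 = m by omega] at h1
          rw [Nat.factorial_succ (y+1), ← mul_assoc, ← h1]
          ring
        have hcf1R : (m.choose (y+1) : ℝ) * ((y+1).factorial : ℝ)
            = (m:ℝ) * (((m-1).choose y : ℝ) * (y.factorial : ℝ)) := by exact_mod_cast hcf1
        have hcf2R : (m.choose (y+1+1) : ℝ) * ((y+1+1).factorial : ℝ)
            = (m:ℝ) * (((m-1).choose (y+1) : ℝ) * ((y+1).factorial : ℝ)) := by
          exact_mod_cast hcf2
        have hne : ((-1:ℝ)^(y+1)) = -(-1:ℝ)^y := by rw [pow_succ]; ring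
        rw [hsign, hfac, hne, hcf1R, hcf2R]
        field_simp
        ring
      have hsf : (-1:ℝ)^m * (m.factorial:ℝ)
          = -((m:ℝ) * ((-1:ℝ)^(m-1) * ((m-1).factorial:ℝ))) := by
        rw [hsign, hfac]; ring
      linear_combination hkey - (zr m / (N:ℝ)) * hsf

theorem stmt4 (m n : ℕ) (hn : 2 ≤ n) (hmn : n ≤ m) (x : ℝ) (hx0 : 0 < x) (hx1 : x < 1) :
    Cint m n x =
      ((-1 : ℝ) ^ m * (m.factorial : ℝ) / ((n : ℝ) - 1))
        * (∑ y ∈ Finset.range (n - 1), zr (m - y) * chainSum' (fun _ => (1 : ℝ)) n y)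
      + (∑ y ∈ Finset.range (n - 1), (m.choose y : ℝ) * (y.factorial : ℝ) * (-1 : ℝ) ^ y
        * chainSum (fun i =>
            (Real.log x) ^ (m - y) / (1 - x) ^ (i - 1) - (Real.log x) ^ (m - y)) n y)
      + (∑ y ∈ Finset.range (n - 1), (m.choose (y + 1) : ℝ) * ((y + 1).factorial : ℝ)
        * (-1 : ℝ) ^ y * chainSum (fun _ => Aint (m - y - 1) 1 (1 - x)) n y) := by
  exact main hx0 hx1 n hn m hmn
end
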